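/- The Weyl algebra A₁ admits no nonzero trace: [A₁, A₁] = A₁, i.e. every element of A₁ is a finite sum of commutators ab - ba. -/
import Mathlib


/-- The defining relation of the Weyl algebra `A₁`: `p·x = x·p + 1`. -/
inductive WeylRel : FreeAlgebra ℂ (Fin 2) → FreeAlgebra ℂ (Fin 2) → Prop
  | comm : WeylRel (FreeAlgebra.ι ℂ 1 * FreeAlgebra.ι ℂ 0)
      (FreeAlgebra.ι ℂ 0 * FreeAlgebra.ι ℂ 1 + 1)

/-- The Weyl algebra `A₁ = ℂ⟨x,p⟩/(px - xp - 1)`. -/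
abbrev WeylAlgebra : Type := RingQuot WeylRel

noncomputable section WeylAux

namespace WeylAux

def X : WeylAlgebra := RingQuot.mkAlgHom ℂ WeylRel (FreeAlgebra.ι ℂ 0)
def P : WeylAlgebra := RingQuot.mkAlgHom ℂ WeylRel (FreeAlgebra.ι ℂ 1)

lemma rel : P * X = X * P + 1 := by
  have h := RingQuot.mkAlgHom_rel ℂ WeylRel.comm
  simpa [X, P, map_mul, map_add, map_one] using h

def D : WeylAlgebra →ₗ[ℂ] WeylAlgebra :=
  LinearMap.mulLeft ℂ P - LinearMap.mulRight ℂ P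

lemma D_apply (a : WeylAlgebra) : D a = P * a - a * P := rfl

lemma D_mul (a b : WeylAlgebra) : D (a * b) = D a * b + a * D b := by
  simp only [D_apply, sub_mul, mul_sub, mul_assoc]; abel

lemma D_X : D X = 1 := by
  rw [D_apply, rel]; abel

lemma D_P : D P = 0 := by
  rw [D_apply]; exact sub_self _

abbrev S : Submodule ℂ WeylAlgebra :=
  Submodule.span ℂ {x : WeylAlgebra | ∃ u v : WeylAlgebra, x = u * v - v * u}

lemma comm_mem (u v : WeylAlgebra) : u * v - v * u ∈ S :=
  Submodule.subset_span ⟨u, v, rfl⟩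

lemma D_mem (a : WeylAlgebra) : D a ∈ S := comm_mem P a

lemma D_X_pow_mul (m : ℕ) (a : WeylAlgebra) :
    D (X ^ (m + 1) * a) = ((m : ℂ) + 1) • (X ^ m * a) + X ^ (m + 1) * D a := by
  induction m generalizing a with
  | zero => simp [pow_one, D_mul, D_X]
  | succ n ih =>
      have h1 : X ^ (n + 2) * a = X * (X ^ (n + 1) * a) := by
        rw [pow_succ', mul_assoc]
      have h2 : D (X * (X ^ (n + 1) * a))
          = X ^ (n + 1) * a + X * D (X ^ (n + 1) * a) := by
        rw [D_mul, D_X, one_mul]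
      rw [h1, h2, ih]
      rw [mul_add, mul_smul_comm, ← mul_assoc, ← pow_succ', ← mul_assoc, ← pow_succ']
      match_scalars <;> ring

lemma key : ∀ n : ℕ, ∀ a : WeylAlgebra, (D ^ n) a = 0 → ∀ m : ℕ, X ^ m * a ∈ S := by
  intro n
  induction n with
  | zero =>
      intro a h m
      simp only [pow_zero, Module.End.one_apply] at h
      simp [h]
  | succ n ih =>
      intro a h m
      have hDa : (D ^ n) (D a) = 0 := by
        have : (D ^ (n + 1)) a = (D ^ n) (D a) := by
          rw [pow_succ, Module.End.mul_apply]
        rwa [this] at h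
      have h1 : X ^ (m + 1) * D a ∈ S := ih (D a) hDa (m + 1)
      have h2 : D (X ^ (m + 1) * a) ∈ S := D_mem _
      have h3 : ((m : ℂ) + 1) • (X ^ m * a) = D (X ^ (m + 1) * a) - X ^ (m + 1) * D a := by
        rw [D_X_pow_mul]; abel
      have h4 : ((m : ℂ) + 1) • (X ^ m * a) ∈ S := h3 ▸ Submodule.sub_mem S h2 h1
      have hm : ((m : ℂ) + 1) ≠ 0 := by
        exact_mod_cast (Nat.cast_add_one_ne_zero m : ((m : ℂ) + 1) ≠ 0)
      exact (Submodule.smul_mem_iff S hm).mp h4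

lemma nilp_mul : ∀ n m k : ℕ, ∀ a b : WeylAlgebra, m + k = n →
    (D ^ m) a = 0 → (D ^ k) b = 0 → (D ^ n) (a * b) = 0 := by
  intro n
  induction n with
  | zero =>
      intro m k a b hmk ha hb
      obtain ⟨hm, hk⟩ := Nat.add_eq_zero.mp hmk
      subst hm; subst hk
      simp only [pow_zero, Module.End.one_apply] at ha hb ⊢
      rw [ha, zero_mul]
  | succ n ih =>
      intro m k a b hmk ha hb
      match m, k with
      | 0, k =>
          simp only [pow_zero, Module.End.one_apply] at ha
          rw [ha, zero_mul, map_zero]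
      | m + 1, 0 =>
          simp only [pow_zero, Module.End.one_apply] at hb
          rw [hb, mul_zero, map_zero]
      | m + 1, k + 1 =>
          have hn : m + (k + 1) = n := by omega
          have hn' : (m + 1) + k = n := by omega
          have ha' : (D ^ m) (D a) = 0 := by
            have : (D ^ (m + 1)) a = (D ^ m) (D a) := by
              rw [pow_succ, Module.End.mul_apply]
            rwa [this] at ha
          have hb' : (D ^ k) (D b) = 0 := by
            have : (D ^ (k + 1)) b = (D ^ k) (D b) := by
              rw [pow_succ, Module.End.mul_apply]
            rwa [this] at hb
          have hab : (D ^ (n + 1)) (a * b) = (D ^ n) (D (a * b)) := by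
            rw [pow_succ, Module.End.mul_apply]
          rw [hab, D_mul, map_add]
          rw [ih m (k + 1) (D a) b hn ha' hb, ih (m + 1) k a (D b) hn' ha hb', add_zero]

lemma nilpotent (a : WeylAlgebra) : ∃ n : ℕ, (D ^ n) a = 0 := by
  obtain ⟨w, rfl⟩ := RingQuot.mkAlgHom_surjective ℂ WeylRel a
  induction w using FreeAlgebra.induction with
  | grade0 r =>
      refine ⟨1, ?_⟩
      rw [pow_one, AlgHom.commutes]
      simp [D_apply, Algebra.commutes]
  | grade1 i =>
      fin_cases i
      · exact ⟨2, by
          show (D ^ 2) X = 0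
          rw [pow_succ, Module.End.mul_apply, pow_one, D_X, D_apply, mul_one, one_mul,
            sub_self]⟩
      · exact ⟨1, by
          show (D ^ 1) P = 0
          rw [pow_one, D_P]⟩
  | mul x y hx hy =>
      obtain ⟨m, hm⟩ := hx
      obtain ⟨k, hk⟩ := hy
      exact ⟨m + k, by rw [map_mul]; exact nilp_mul (m + k) m k _ _ rfl hm hk⟩
  | add x y hx hy =>
      obtain ⟨m, hm⟩ := hx
      obtain ⟨k, hk⟩ := hy
      refine ⟨m + k, ?_⟩
      rw [map_add, map_add]
      have h1 : (D ^ (m + k)) ((RingQuot.mkAlgHom ℂ WeylRel) x) = 0 := by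
        rw [add_comm, pow_add, Module.End.mul_apply, hm, map_zero]
      have h2 : (D ^ (m + k)) ((RingQuot.mkAlgHom ℂ WeylRel) y) = 0 := by
        rw [pow_add, Module.End.mul_apply, hk, map_zero]
      rw [h1, h2, add_zero]

end WeylAux

end WeylAux

/-- `[A₁, A₁] = A₁`: every element of the Weyl algebra lies in the linear span of
commutators; in particular `A₁` admits no nonzero trace. -/
theorem weylAlgebra_commutators_span :
    ∀ a : WeylAlgebra,
      a ∈ Submodule.span ℂ {x : WeylAlgebra | ∃ u v : WeylAlgebra, x = u * v - v * u} := by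
  intro a
  obtain ⟨n, hn⟩ := WeylAux.nilpotent a
  have := WeylAux.key n a hn 0
  simpa using this
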